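/- arXiv:2303.07444 — 3 statements merged into one kernel-verified Lean document; each statement's English description precedes it below -/
import Mathlib

section
/- For every m ∈ ℕ and every integer r > 2, there exists n ∈ ℕ such that every (1 − 1/r)-general cover 𝒞 of the n-dimensional grid graph G_n of width n contains an element C with tree-α(G_n[C]) ≥ m. Consequently, the class {G_n : n ∈ ℕ} is not fractionally tree-α-fragile. -/
open Classical

/-- A tree decomposition of a graph `G`. -/
structure TreeDecomp {V : Type*} (G : SimpleGraph V) where
  ι : Type
  fin : Fintype ι
  T : SimpleGraph ι
  isTree : T.IsTree
  bag : ι → Set V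
  mem_bag : ∀ v : V, ∃ t, v ∈ bag t
  edge_bag : ∀ ⦃u v : V⦄, G.Adj u v → ∃ t, u ∈ bag t ∧ v ∈ bag t
  bag_connected : ∀ v : V, (T.induce {t | v ∈ bag t}).Connected

/-- `I` is an independent set of `G` contained in `S`, i.e. an independent set of `G[S]`. -/
def IsIndepSetIn {V : Type*} (G : SimpleGraph V) (S : Set V) (I : Finset V) : Prop :=
  ↑I ⊆ S ∧ ∀ u ∈ I, ∀ v ∈ I, u ≠ v → ¬ G.Adj u v

/-- `α(G[S]) ≤ k`. -/
def IndepLE {V : Type*} (G : SimpleGraph V) (S : Set V) (k : ℕ) : Prop :=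
  ∀ I : Finset V, IsIndepSetIn G S I → I.card ≤ k

/-- The independence number of the tree decomposition is at most `k`. -/
def TreeDecomp.IndepNumLE {V : Type*} {G : SimpleGraph V} (td : TreeDecomp G) (k : ℕ) : Prop :=
  ∀ t : td.ι, IndepLE G (td.bag t) k

/-- The tree-independence number of `G` is at most `k`. -/
def treeAlphaLE {V : Type*} (G : SimpleGraph V) (k : ℕ) : Prop :=
  ∃ td : TreeDecomp G, td.IndepNumLE k

/-- The tree-independence number of `G`. -/
noncomputable def treeAlpha {V : Type*} (G : SimpleGraph V) : ℕ :=
  sInf {k | treeAlphaLE G k}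

/-- A layering of `G`, encoded by the function sending a vertex to the index of its layer. -/
def IsLayering {V : Type*} (G : SimpleGraph V) (L : V → ℕ) : Prop :=
  ∀ ⦃u v : V⦄, G.Adj u v → (L u : ℤ) ≤ (L v : ℤ) + 1

/-- The layered tree-independence number of `G` is at most `k`. -/
def layeredTreeAlphaLE {V : Type*} (G : SimpleGraph V) (k : ℕ) : Prop :=
  ∃ (td : TreeDecomp G) (L : V → ℕ), IsLayering G L ∧
    ∀ (t : td.ι) (i : ℕ), IndepLE G (td.bag t ∩ {v | L v = i}) k

/-- The layered tree-independence number of `G`. -/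
noncomputable def layeredTreeAlpha {V : Type*} (G : SimpleGraph V) : ℕ :=
  sInf {k | layeredTreeAlphaLE G k}

/-- The number of elements of the multiset `𝒞` containing `v` (with multiplicity). -/
noncomputable def coverCount {V : Type*} (𝒞 : Multiset (Set V)) (v : V) : ℕ :=
  Multiset.countP (fun C => v ∈ C) 𝒞

/-- `𝒞` is a `β`-general cover: every vertex belongs to at least `β·|𝒞|` elements. -/
def IsGeneralCover {V : Type*} (β : ℝ) (𝒞 : Multiset (Set V)) : Prop :=
  𝒞 ≠ 0 ∧ ∀ v : V, β * (Multiset.card 𝒞 : ℝ) ≤ (coverCount 𝒞 v : ℝ)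

/-- The intersection graph of an (indexed) family of sets. -/
def intersectionGraph {ι : Type*} {α : Type*} (D : ι → Set α) : SimpleGraph ι where
  Adj i j := i ≠ j ∧ (D i ∩ D j).Nonempty
  symm := by
    constructor
    rintro i j ⟨hne, x, hx1, hx2⟩
    exact ⟨hne.symm, x, hx2, hx1⟩
  loopless := by
    constructor
    rintro i ⟨hne, -⟩
    exact hne rfl

/-- The `p`-th power of a graph. -/
def gpower {V : Type*} (G : SimpleGraph V) (p : ℕ) : SimpleGraph V where
  Adj u v := u ≠ v ∧ ∃ w : G.Walk u v, w.length ≤ p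
  symm := by
    constructor
    rintro u v ⟨hne, w, hw⟩
    exact ⟨hne.symm, w.reverse, by simpa using hw⟩
  loopless := by
    constructor
    rintro u ⟨hne, -⟩
    exact hne rfl

/-- The axis-aligned closed hypercube of side length `r` with lower corner `x`. -/
def cube (d : ℕ) (x : EuclideanSpace ℝ (Fin d)) (r : ℝ) : Set (EuclideanSpace ℝ (Fin d)) :=
  {y | ∀ i, x i ≤ y i ∧ y i ≤ x i + r}

/-- The size of an object: the side length of its smallest enclosing axis-aligned hypercube. -/
noncomputable def objSize (d : ℕ) (O : Set (EuclideanSpace ℝ (Fin d))) : ℝ :=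
  sInf {r : ℝ | 0 ≤ r ∧ ∃ x, O ⊆ cube d x r}

/-- The collection `O` is `c`-fat. -/
def IsFat {ι : Type*} (d : ℕ) (c : ℝ) (O : ι → Set (EuclideanSpace ℝ (Fin d))) : Prop :=
  ∀ r : ℝ, 0 < r → ∀ x : EuclideanSpace ℝ (Fin d), ∀ P : Finset ι,
    (∀ i ∈ P, ∀ j ∈ P, i ≠ j → Disjoint (O i) (O j)) →
    (∀ i ∈ P, (O i ∩ cube d x r).Nonempty ∧ r ≤ objSize d (O i)) →
    ∃ pts : Finset (EuclideanSpace ℝ (Fin d)),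
      (pts.card : ℝ) ≤ c ∧ ∀ i ∈ P, ∃ p ∈ pts, p ∈ O i

/-- The `n`-dimensional grid graph of width `n`. -/
def gridGraphN (n : ℕ) : SimpleGraph (Fin n → Fin n) where
  Adj a b := ∑ i, ((a i : ℤ) - (b i : ℤ)).natAbs = 1
  symm := by
    constructor
    intro a b h
    rw [← h]
    exact Finset.sum_congr rfl fun i _ => by omega
  loopless := by
    constructor
    intro a h
    simp at h

/-- The grid graph on `ℤ²`. -/
def latticeGraph : SimpleGraph (ℤ × ℤ) where
  Adj p q := (p.1 - q.1).natAbs + (p.2 - q.2).natAbs = 1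
  symm := by
    constructor
    intro p q h
    omega
  loopless := by
    constructor
    intro p h
    simp at h

/-- `P` is (the vertex set of) a path on the integer grid: a finite nonempty subset of `ℤ²`
whose induced subgraph in the grid graph is a path. -/
def IsGridPath (P : Set (ℤ × ℤ)) : Prop :=
  P.Finite ∧ P.Nonempty ∧ (latticeGraph.induce P).IsTree ∧
    ∀ v : P, ((latticeGraph.induce P).neighborSet v).ncard ≤ 2


namespace TreeAux

open SimpleGraph

variable {ι : Type} {T : SimpleGraph ι}

/-- the unique path in a tree -/
noncomputable def tpath (hT : T.IsTree) (a b : ι) : T.Walk a b :=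
  ((SimpleGraph.isTree_iff_existsUnique_path.mp hT).2 a b).exists.choose

lemma tpath_isPath (hT : T.IsTree) (a b : ι) : (tpath hT a b).IsPath :=
  ((SimpleGraph.isTree_iff_existsUnique_path.mp hT).2 a b).exists.choose_spec

lemma tpath_eq (hT : T.IsTree) {a b : ι} (p : T.Walk a b) (hp : p.IsPath) :
    p = tpath hT a b := by
  obtain ⟨q, hq, huniq⟩ := (SimpleGraph.isTree_iff_existsUnique_path.mp hT).2 a b
  rw [huniq p hp, huniq (tpath hT a b) (tpath_isPath hT a b)]

lemma tpath_support_subset (hT : T.IsTree) {a b : ι} (w : T.Walk a b) :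
    ∀ x ∈ (tpath hT a b).support, x ∈ w.support := by
  classical
  intro x hx
  have h : w.bypass = tpath hT a b := tpath_eq hT w.bypass w.bypass_isPath
  exact w.support_bypass_subset (h ▸ hx)

lemma tpath_reverse (hT : T.IsTree) (a b : ι) :
    tpath hT b a = (tpath hT a b).reverse :=
  (tpath_eq hT _ ((tpath_isPath hT a b).reverse)).symm

lemma mem_tpath_symm (hT : T.IsTree) {a b x : ι} (h : x ∈ (tpath hT a b).support) :
    x ∈ (tpath hT b a).support := by
  rw [tpath_reverse hT a b, SimpleGraph.Walk.support_reverse, List.mem_reverse]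
  exact h

lemma tpath_length (hT : T.IsTree) (a b : ι) :
    (tpath hT a b).length = T.dist a b := by
  classical
  have hr : T.Reachable a b := hT.isConnected a b
  obtain ⟨w, hw⟩ := hr.exists_walk_length_eq_dist
  have h1 : T.dist a b ≤ (tpath hT a b).length := SimpleGraph.dist_le _
  have h2 : (tpath hT a b).length ≤ w.length := by
    rw [← tpath_eq hT w.bypass w.bypass_isPath]
    exact w.length_bypass_le
  omega

lemma tpath_dist_add (hT : T.IsTree) {a b x : ι} (hx : x ∈ (tpath hT a b).support) :
    T.dist a x + T.dist x b = T.dist a b := by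
  classical
  set p := tpath hT a b with hp
  have hpp : p.IsPath := tpath_isPath hT a b
  have e1 : T.dist a x = (p.takeUntil x hx).length := by
    rw [tpath_eq hT (p.takeUntil x hx) (hpp.takeUntil hx), tpath_length]
  have e2 : T.dist x b = (p.dropUntil x hx).length := by
    rw [tpath_eq hT (p.dropUntil x hx) (hpp.dropUntil hx), tpath_length]
  have e3 : (p.takeUntil x hx).length + (p.dropUntil x hx).length = p.length := by
    rw [← SimpleGraph.Walk.length_append, p.take_spec hx]
  rw [e1, e2, ← tpath_length hT a b, e3]

lemma eq_of_dist_eq_zero (hT : T.IsTree) {a b : ι} (h : T.dist a b = 0) : a = b := by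
  have h2 : (tpath hT a b).length = 0 := by rw [tpath_length hT a b, h]
  exact SimpleGraph.Walk.eq_of_length_eq_zero h2

/-- a path appended to a path sharing only the midpoint is a path -/
lemma isPath_append {u v w : ι} {p : T.Walk u v} {q : T.Walk v w}
    (hp : p.IsPath) (hq : q.IsPath) (h : ∀ x, x ∈ p.support → x ∈ q.support → x = v) :
    (p.append q).IsPath := by
  rw [SimpleGraph.Walk.isPath_def, SimpleGraph.Walk.support_append]
  have hq' : q.support = v :: q.support.tail := q.support_eq_cons
  have hqn : q.support.Nodup := hq.support_nodup
  rw [hq'] at hqn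
  have hvnot : v ∉ q.support.tail := (List.nodup_cons.mp hqn).1
  refine List.Nodup.append hp.support_nodup (List.nodup_cons.mp hqn).2 ?_
  intro x hx1 hx2
  have : x = v := h x hx1 (by rw [hq']; exact List.mem_cons_of_mem _ hx2)
  exact hvnot (this ▸ hx2)

lemma tpath_support_in_connected_set (hT : T.IsTree) {S : Set ι}
    (hS : (T.induce S).Connected) {a b : ι} (ha : a ∈ S) (hb : b ∈ S) :
    ∀ x ∈ (tpath hT a b).support, x ∈ S := by
  classical
  obtain ⟨w'⟩ := hS.preconnected ⟨a, ha⟩ ⟨b, hb⟩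
  let f : T.induce S →g T := ⟨Subtype.val, fun h => h⟩
  have hmap := tpath_support_subset hT (w'.map f)
  intro x hx
  have hx2 := hmap x hx
  rw [SimpleGraph.Walk.support_map] at hx2
  obtain ⟨y, _, rfl⟩ := List.mem_map.mp hx2
  exact y.2

/-- KEY: in any tree decomposition, some vertex of `U` has all its `U`-neighbors in one bag. -/
lemma exists_bag_containing_nbhd {V' : Type*} {H : SimpleGraph V'} (td : TreeDecomp H)
    (U : Finset V') (hU : U.Nonempty) :
    ∃ u ∈ U, ∃ t : td.ι, u ∈ td.bag t ∧ ∀ w ∈ U, H.Adj u w → w ∈ td.bag t := by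
  classical
  haveI := td.fin
  have hT := td.isTree
  obtain ⟨r₀⟩ : Nonempty td.ι := hT.isConnected.nonempty
  set d : td.ι → ℕ := fun t => td.T.dist r₀ t with hd
  have hsel : ∀ u : V', ∃ t, u ∈ td.bag t ∧ ∀ t', u ∈ td.bag t' → d t ≤ d t' := by
    intro u
    obtain ⟨t₀, ht₀⟩ := td.mem_bag u
    obtain ⟨t, ht, hmin⟩ := Finset.exists_min_image
      (Finset.univ.filter fun t => u ∈ td.bag t) d ⟨t₀, by simp [ht₀]⟩
    exact ⟨t, (Finset.mem_filter.mp ht).2, fun t' h' => hmin t' (by simp [h'])⟩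
  choose tm htm hmin using hsel
  obtain ⟨u, hu, hmax⟩ := Finset.exists_max_image U (fun u => d (tm u)) hU
  refine ⟨u, hu, tm u, htm u, ?_⟩
  intro w hw hadj
  obtain ⟨s, hus, hws⟩ := td.edge_bag hadj
  set t' := tm u with ht'
  set c := tm w with hc
  -- support of the path from t' to s lies in S_u
  have hSu : ∀ x ∈ (tpath hT t' s).support, u ∈ td.bag x := by
    intro x hx
    exact tpath_support_in_connected_set hT (td.bag_connected u) (htm u) hus x hx
  have hge : ∀ x ∈ (tpath hT t' s).support, d t' ≤ d x := fun x hx => hmin u x (hSu x hx)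
  -- concatenation r₀ → t' → s is a path
  have hcap : ∀ x, x ∈ (tpath hT r₀ t').support → x ∈ (tpath hT t' s).support → x = t' := by
    intro x h1 h2
    have e1 : td.T.dist r₀ x + td.T.dist x t' = td.T.dist r₀ t' := tpath_dist_add hT h1
    have e2 : d t' ≤ d x := hge x h2
    have e3 : td.T.dist x t' = 0 := by
      have hx1 : d x = td.T.dist r₀ x := rfl
      have hx2 : d t' = td.T.dist r₀ t' := rfl
      omega
    exact eq_of_dist_eq_zero hT e3
  have hconcat : ((tpath hT r₀ t').append (tpath hT t' s)).IsPath :=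
    isPath_append (tpath_isPath hT r₀ t') (tpath_isPath hT t' s) hcap
  have heq : (tpath hT r₀ t').append (tpath hT t' s) = tpath hT r₀ s :=
    tpath_eq hT _ hconcat
  have hmemrs : t' ∈ (tpath hT r₀ s).support := by
    rw [← heq, SimpleGraph.Walk.mem_support_append_iff]
    exact Or.inl ((tpath hT r₀ t').end_mem_support)
  -- t' lies on (tpath r₀ c) or (tpath c s)
  have hsub := tpath_support_subset hT ((tpath hT r₀ c).append (tpath hT c s)) t' hmemrs
  rw [SimpleGraph.Walk.mem_support_append_iff] at hsub
  have hts : t' ∈ (tpath hT c s).support := by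
    rcases hsub with h1 | h2
    · have e1 : td.T.dist r₀ t' + td.T.dist t' c = td.T.dist r₀ c := tpath_dist_add hT h1
      have e2 : d c ≤ d t' := hmax w hw
      have e3 : td.T.dist t' c = 0 := by
        have hx1 : d c = td.T.dist r₀ c := rfl
        have hx2 : d t' = td.T.dist r₀ t' := rfl
        omega
      have : t' = c := eq_of_dist_eq_zero hT e3
      rw [this]
      exact (tpath hT c s).start_mem_support
    · exact h2
  -- S_w contains the path from c to s, hence t'
  exact tpath_support_in_connected_set hT (td.bag_connected w) (htm w) hws t' hts

end TreeAux


namespace GridAux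
open Finset
variable {n : ℕ}


lemma exists_min_degree_subset {α : Type*} [DecidableEq α] (G : SimpleGraph α)
    [DecidableRel G.Adj] (d : ℕ) :
    ∀ W : Finset α, 2*d*W.card < ∑ v ∈ W, (W.filter (fun w => G.Adj v w)).card →
    ∃ U : Finset α, U ⊆ W ∧ U.Nonempty ∧
      ∀ u ∈ U, d + 1 ≤ (U.filter (fun w => G.Adj u w)).card := by
  intro W
  induction W using Finset.strongInduction with
  | _ W ih =>
    intro hsum
    by_cases hall : ∀ u ∈ W, d + 1 ≤ (W.filter (fun w => G.Adj u w)).card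
    · refine ⟨W, subset_rfl, ?_, hall⟩
      rcases W.eq_empty_or_nonempty with h | h
      · subst h; simp at hsum
      · exact h
    · push_neg at hall
      obtain ⟨v, hv, hdeg⟩ := hall
      have hdeg' : (W.filter (fun w => G.Adj v w)).card ≤ d := by omega
      set W' := W.erase v with hW'
      have hss : W' ⊂ W := Finset.erase_ssubset hv
      -- each u in W' loses at most [adj u v] from its degree
      have h2 : ∀ u ∈ W', (W.filter (fun w => G.Adj u w)).card ≤
          (W'.filter (fun w => G.Adj u w)).card + (if G.Adj u v then 1 else 0) := by
        intro u hu
        by_cases hadj : G.Adj u v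
        · rw [if_pos hadj]
          have hsub : W.filter (fun w => G.Adj u w) ⊆
              insert v (W'.filter (fun w => G.Adj u w)) := by
            intro x hx
            rw [Finset.mem_filter] at hx
            by_cases hxv : x = v
            · rw [hxv]; exact Finset.mem_insert_self _ _
            · exact Finset.mem_insert_of_mem (Finset.mem_filter.mpr
                ⟨Finset.mem_erase.mpr ⟨hxv, hx.1⟩, hx.2⟩)
          exact (Finset.card_le_card hsub).trans (Finset.card_insert_le _ _)
        · rw [if_neg hadj]
          have : W.filter (fun w => G.Adj u w) = W'.filter (fun w => G.Adj u w) := by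
            ext x
            simp only [Finset.mem_filter, Finset.mem_erase, hW']
            constructor
            · rintro ⟨hxW, hx⟩
              refine ⟨⟨?_, hxW⟩, hx⟩
              rintro rfl; exact hadj hx
            · rintro ⟨⟨_, hxW⟩, hx⟩; exact ⟨hxW, hx⟩
          rw [this]; omega
      have h3 : ∑ u ∈ W', (if G.Adj u v then 1 else 0) ≤ d := by
        have hsub : W'.filter (fun u => G.Adj u v) ⊆ W.filter (fun w => G.Adj v w) := by
          intro x hx
          rw [Finset.mem_filter] at hx ⊢
          exact ⟨(Finset.erase_subset _ _) hx.1, hx.2.symm⟩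
        have hle := Finset.card_le_card hsub
        have hsum1 : ∑ u ∈ W', (if G.Adj u v then 1 else 0) =
            (W'.filter (fun u => G.Adj u v)).card := by
          rw [Finset.card_filter]
        omega
      have h4 : ∑ u ∈ W', (W.filter (fun w => G.Adj u w)).card ≤
          (∑ u ∈ W', (W'.filter (fun w => G.Adj u w)).card) + d := by
        calc ∑ u ∈ W', (W.filter (fun w => G.Adj u w)).card
            ≤ ∑ u ∈ W', ((W'.filter (fun w => G.Adj u w)).card + (if G.Adj u v then 1 else 0)) :=
              Finset.sum_le_sum h2
          _ = (∑ u ∈ W', (W'.filter (fun w => G.Adj u w)).card) +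
              ∑ u ∈ W', (if G.Adj u v then 1 else 0) := Finset.sum_add_distrib
          _ ≤ _ := by omega
      have h5 : (W.filter (fun w => G.Adj v w)).card +
          ∑ u ∈ W', (W.filter (fun w => G.Adj u w)).card =
          ∑ u ∈ W, (W.filter (fun w => G.Adj u w)).card := by
        rw [hW']
        exact Finset.add_sum_erase W (fun u => (W.filter (fun w => G.Adj u w)).card) hv
      have hcard : W'.card = W.card - 1 := Finset.card_erase_of_mem hv
      have hWpos : 1 ≤ W.card := Finset.card_pos.mpr ⟨v, hv⟩
      have hnext : 2*d*W'.card < ∑ u ∈ W', (W'.filter (fun w => G.Adj u w)).card := by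
        have expand : 2*d*W.card = 2*d*W'.card + 2*d := by
          rw [hcard]
          have : W.card = (W.card - 1) + 1 := by omega
          nlinarith [this]
        omega
      obtain ⟨U, hUW, hUne, hUdeg⟩ := ih W' hss hnext
      exact ⟨U, hUW.trans (Finset.erase_subset _ _), hUne, hUdeg⟩



/-- increment coordinate `i` if possible -/
def up {n : ℕ} (i : Fin n) (v : Fin n → Fin n) : Fin n → Fin n :=
  Function.update v i (if h : (v i).val + 1 < n then ⟨(v i).val + 1, h⟩ else v i)

lemma up_apply_ne {n : ℕ} (i : Fin n) (v : Fin n → Fin n) {j : Fin n} (hj : j ≠ i) :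
    up i v j = v j := Function.update_of_ne hj _ _

lemma up_apply_eq {n : ℕ} (i : Fin n) (v : Fin n → Fin n) (h : (v i).val + 1 < n) :
    (up i v i).val = (v i).val + 1 := by
  unfold up
  rw [Function.update_self, dif_pos h]

lemma grid_adj_up {n : ℕ} {i : Fin n} {v : Fin n → Fin n} (h : (v i).val + 1 < n) :
    (gridGraphN n).Adj v (up i v) := by
  show ∑ j, ((v j : ℤ) - ((up i v) j : ℤ)).natAbs = 1
  rw [Finset.sum_eq_single i]
  · have h1 := up_apply_eq i v h
    omega
  · intro j _ hj
    rw [up_apply_ne i v hj]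
    omega
  · intro hi; exact absurd (Finset.mem_univ i) hi



/-- sum of coordinates -/
def sv {n : ℕ} (v : Fin n → Fin n) : ℕ := ∑ j, (v j).val

lemma sv_up {n : ℕ} {i : Fin n} {v : Fin n → Fin n} (h : (v i).val + 1 < n) :
    sv (up i v) = sv v + 1 := by
  unfold sv
  have h1 : ∀ j, (up i v j).val = if j = i then (v j).val + 1 else (v j).val := by
    intro j
    by_cases hj : j = i
    · subst hj; rw [if_pos rfl]; exact up_apply_eq j v h
    · rw [if_neg hj, up_apply_ne i v hj]
  calc ∑ j, (up i v j).val = ∑ j, (if j = i then (v j).val + 1 else (v j).val) := by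
        exact Finset.sum_congr rfl fun j _ => h1 j
    _ = ∑ j, ((v j).val + (if j = i then 1 else 0)) := by
        refine Finset.sum_congr rfl fun j _ => ?_
        by_cases hj : j = i <;> simp [hj]
    _ = (∑ j, (v j).val) + ∑ j, (if j = i then 1 else 0) := Finset.sum_add_distrib
    _ = (∑ j, (v j).val) + 1 := by rw [Finset.sum_ite_eq' Finset.univ i (fun _ => 1)]
                                   simp

lemma up_inj {n : ℕ} {i : Fin n} {v w : Fin n → Fin n}
    (hv : (v i).val + 1 < n) (hw : (w i).val + 1 < n) (h : up i v = up i w) : v = w := by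
  funext j
  by_cases hj : j = i
  · subst hj
    have h1 : (up j v j).val = (v j).val + 1 := up_apply_eq j v hv
    have h2 : (up j w j).val = (w j).val + 1 := up_apply_eq j w hw
    have := congrFun h j
    rw [this] at h1
    exact Fin.ext (by omega)
  · have := congrFun h j
    rw [up_apply_ne i v hj, up_apply_ne i w hj] at this
    exact this

lemma up_index_inj {n : ℕ} {i i' : Fin n} {v : Fin n → Fin n}
    (hv : (v i).val + 1 < n) (h : up i v = up i' v) : i = i' := by
  by_contra hne
  have h1 : (up i v i).val = (v i).val + 1 := up_apply_eq i v hv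
  have h2 : up i' v i = v i := up_apply_ne i' v hne
  have := congrFun h i
  rw [h2] at this
  rw [this] at h1
  omega

/-- adjacency forces opposite parities -/
lemma grid_adj_parity {n : ℕ} {a b : Fin n → Fin n} (h : (gridGraphN n).Adj a b) :
    (sv a + sv b) % 2 = 1 := by
  have hsum : ∑ i, ((a i : ℤ) - (b i : ℤ)).natAbs = 1 := h
  have key : ∀ x y : ℕ, ((x:ℤ) - (y:ℤ)).natAbs % 2 = (x + y) % 2 := by intros x y; omega
  have e1 : (sv a + sv b) % 2 = (∑ i, ((a i).val + (b i).val)) % 2 := by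
    unfold sv; rw [Finset.sum_add_distrib]
  have e2 : (∑ i, ((a i).val + (b i).val)) % 2
      = (∑ i, (((a i : ℤ) - (b i : ℤ)).natAbs)) % 2 := by
    rw [Finset.sum_nat_mod, Finset.sum_nat_mod (f := fun i => ((a i : ℤ) - (b i : ℤ)).natAbs)]
    congr 1
    refine Finset.sum_congr rfl fun i _ => ?_
    exact (key (a i).val (b i).val).symm
  rw [e1, e2, hsum]

lemma grid_triangle_free {n : ℕ} {a b c : Fin n → Fin n}
    (hab : (gridGraphN n).Adj a b) (hac : (gridGraphN n).Adj a c)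
    (hbc : (gridGraphN n).Adj b c) : False := by
  have h1 := grid_adj_parity hab
  have h2 := grid_adj_parity hac
  have h3 := grid_adj_parity hbc
  omega





lemma fiber_card_eq (i : Fin n) (t t' : Fin n) :
    (univ.filter (fun v : Fin n → Fin n => v i = t)).card
      = (univ.filter (fun v : Fin n → Fin n => v i = t')).card := by
  refine Finset.card_nbij' (fun v => Function.update v i t') (fun v => Function.update v i t)
    ?_ ?_ ?_ ?_
  · intro v hv
    simp only [Finset.mem_coe, mem_filter, mem_univ, true_and] at hv ⊢
    exact Function.update_self i t' v
  · intro v hv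
    simp only [Finset.mem_coe, mem_filter, mem_univ, true_and] at hv ⊢
    exact Function.update_self i t v
  · intro v hv
    simp only [Finset.mem_coe, mem_filter, mem_univ, true_and] at hv
    funext j
    by_cases hj : j = i
    · subst hj; simp [Function.update_self, hv]
    · simp [Function.update_of_ne hj]
  · intro v hv
    simp only [Finset.mem_coe, mem_filter, mem_univ, true_and] at hv
    funext j
    by_cases hj : j = i
    · subst hj; simp [Function.update_self, hv]
    · simp [Function.update_of_ne hj]

lemma card_fiber_mul (i : Fin n) (t0 : Fin n) :
    Fintype.card (Fin n → Fin n)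
      = n * (univ.filter (fun v : Fin n → Fin n => v i = t0)).card := by
  have h1 : (univ : Finset (Fin n → Fin n)).card
      = ∑ t ∈ univ, ((univ : Finset (Fin n → Fin n)).filter (fun v => v i = t)).card :=
    Finset.card_eq_sum_card_fiberwise (fun v _ => Finset.mem_univ (v i))
  rw [← Finset.card_univ, h1]
  rw [Finset.sum_congr rfl (fun t _ => fiber_card_eq i t t0)]
  rw [Finset.sum_const, Finset.card_univ, Fintype.card_fin, smul_eq_mul]

lemma filterP_card (hn : 0 < n) :
    (univ.filter (fun t : Fin n => t.val + 1 < n)).card = n - 1 := by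
  have hsplit : (univ.filter (fun t : Fin n => t.val + 1 < n)).card
      + (univ.filter (fun t : Fin n => ¬ (t.val + 1 < n))).card = (univ : Finset (Fin n)).card :=
    Finset.card_filter_add_card_filter_not _
  have hlast : n - 1 < n := by omega
  have hone : (univ.filter (fun t : Fin n => ¬ (t.val + 1 < n))) = {(⟨n-1, hlast⟩ : Fin n)} := by
    ext t
    simp only [mem_filter, mem_univ, true_and, Finset.mem_singleton]
    constructor
    · intro ht
      have h2 := t.isLt
      apply Fin.ext
      show t.val = n - 1
      omega
    · intro ht
      rw [ht]
      show ¬ ((n-1) + 1 < n)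
      omega
  rw [hone] at hsplit
  simp only [Finset.card_singleton, Finset.card_univ, Fintype.card_fin] at hsplit
  omega

lemma card_upvalid (hn : 0 < n) (i : Fin n) :
    n * (univ.filter (fun v : Fin n → Fin n => (v i).val + 1 < n)).card
      = (n - 1) * Fintype.card (Fin n → Fin n) := by
  set e : Fin n := ⟨0, hn⟩ with he
  have hA : (univ.filter (fun v : Fin n → Fin n => (v i).val + 1 < n)).card
      = (univ.filter (fun t : Fin n => t.val + 1 < n)).card
        * (univ.filter (fun v : Fin n → Fin n => v i = e)).card := by
    have h1 : (univ.filter (fun v : Fin n → Fin n => (v i).val + 1 < n)).card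
        = ∑ t ∈ univ.filter (fun t : Fin n => t.val + 1 < n),
          ((univ.filter (fun v : Fin n → Fin n => (v i).val + 1 < n)).filter
            (fun v => v i = t)).card := by
      refine Finset.card_eq_sum_card_fiberwise (fun v hv => ?_)
      simp only [Finset.mem_coe, mem_filter, mem_univ, true_and] at hv ⊢
      exact hv
    have h2 : ∀ t ∈ univ.filter (fun t : Fin n => t.val + 1 < n),
        ((univ.filter (fun v : Fin n → Fin n => (v i).val + 1 < n)).filter
          (fun v => v i = t)).card
        = (univ.filter (fun v : Fin n → Fin n => v i = e)).card := by
      intro t ht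
      simp only [mem_filter, mem_univ, true_and] at ht
      have h3 : (univ.filter (fun v : Fin n → Fin n => (v i).val + 1 < n)).filter
          (fun v => v i = t) = univ.filter (fun v : Fin n → Fin n => v i = t) := by
        ext v
        simp only [mem_filter, mem_univ, true_and]
        constructor
        · rintro ⟨_, hv⟩; exact hv
        · rintro hv; exact ⟨by rw [hv]; exact ht, hv⟩
      rw [h3]
      exact fiber_card_eq i t e
    rw [h1, Finset.sum_congr rfl h2, Finset.sum_const, smul_eq_mul]
  rw [hA, filterP_card hn, card_fiber_mul i e]
  ring


lemma UP_card (hn : 0 < n) :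
    ((univ ×ˢ univ : Finset ((Fin n → Fin n) × Fin n)).filter
        (fun p => (p.1 p.2).val + 1 < n)).card
      = (n - 1) * Fintype.card (Fin n → Fin n) := by
  set UP := ((univ ×ˢ univ : Finset ((Fin n → Fin n) × Fin n)).filter
        (fun p => (p.1 p.2).val + 1 < n)) with hUP
  have h1 : UP.card = ∑ i ∈ (univ : Finset (Fin n)), (UP.filter (fun p => p.2 = i)).card :=
    Finset.card_eq_sum_card_fiberwise (fun p _ => Finset.mem_univ p.2)
  have h2 : ∀ i ∈ (univ : Finset (Fin n)), (UP.filter (fun p => p.2 = i)).card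
      = (univ.filter (fun v : Fin n → Fin n => (v i).val + 1 < n)).card := by
    intro i _
    refine Finset.card_nbij' (fun p => p.1) (fun v => (v, i)) ?_ ?_ ?_ ?_
    · rintro ⟨v, j⟩ hp
      simp only [Finset.mem_coe, hUP, mem_filter, mem_product, mem_univ, true_and, and_true] at hp ⊢
      obtain ⟨hv, hi⟩ := hp
      rw [← hi]; exact hv
    · intro v hv
      simp only [Finset.mem_coe, hUP, mem_filter, mem_product, mem_univ, true_and, and_true] at hv ⊢
      exact hv
    · rintro ⟨v, j⟩ hp
      simp only [Finset.mem_coe, hUP, mem_filter] at hp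
      have : j = i := hp.2
      rw [this]
    · intro v hv; rfl
  have h3 : n * UP.card = n * ((n - 1) * Fintype.card (Fin n → Fin n)) := by
    rw [h1, Finset.mul_sum]
    rw [Finset.sum_congr rfl (fun i hi => by rw [h2 i hi])]
    rw [Finset.sum_congr rfl (fun i _ => card_upvalid hn i)]
    rw [Finset.sum_const, Finset.card_univ, Fintype.card_fin, smul_eq_mul]
  exact Nat.eq_of_mul_eq_mul_left hn h3

lemma good_card_lower (hn : 0 < n) (C : Set (Fin n → Fin n)) :
    (n - 1) * Fintype.card (Fin n → Fin n)
      ≤ ((univ ×ˢ univ : Finset ((Fin n → Fin n) × Fin n)).filter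
          (fun p => (p.1 p.2).val + 1 < n ∧ p.1 ∈ C ∧ up p.2 p.1 ∈ C)).card
        + (univ.filter (fun v : Fin n → Fin n => v ∉ C)).card * n
        + (univ.filter (fun v : Fin n → Fin n => v ∉ C)).card * n := by
  classical
  set P := (univ ×ˢ univ : Finset ((Fin n → Fin n) × Fin n)) with hP
  set UP := P.filter (fun p => (p.1 p.2).val + 1 < n) with hUP
  set f0 := P.filter (fun p => (p.1 p.2).val + 1 < n ∧ p.1 ∈ C ∧ up p.2 p.1 ∈ C) with hf0
  set f1 := P.filter (fun p => (p.1 p.2).val + 1 < n ∧ p.1 ∉ C) with hf1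
  set f2 := P.filter (fun p => (p.1 p.2).val + 1 < n ∧ up p.2 p.1 ∉ C) with hf2
  set DF := univ.filter (fun v : Fin n → Fin n => v ∉ C) with hDF
  have hsub : UP ⊆ f0 ∪ f1 ∪ f2 := by
    intro p hp
    simp only [hUP, mem_filter] at hp
    obtain ⟨hpP, hval⟩ := hp
    by_cases hc1 : p.1 ∈ C
    · by_cases hc2 : up p.2 p.1 ∈ C
      · exact Finset.mem_union_left _ (Finset.mem_union_left _
          (Finset.mem_filter.mpr ⟨hpP, ⟨hval, hc1, hc2⟩⟩))
      · exact Finset.mem_union_right _ (Finset.mem_filter.mpr ⟨hpP, hval, hc2⟩)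
    · exact Finset.mem_union_left _ (Finset.mem_union_right _
        (Finset.mem_filter.mpr ⟨hpP, hval, hc1⟩))
  have hcard1 : f1.card ≤ DF.card * n := by
    have : f1 ⊆ DF ×ˢ (univ : Finset (Fin n)) := by
      intro p hp
      simp only [hf1, hP, mem_filter, mem_product, mem_univ, true_and, and_true] at hp ⊢
      simp only [hDF, mem_filter, mem_univ, true_and]
      exact hp.2
    calc f1.card ≤ (DF ×ˢ (univ : Finset (Fin n))).card := Finset.card_le_card this
      _ = DF.card * n := by rw [Finset.card_product, Finset.card_univ, Fintype.card_fin]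
  have hcard2 : f2.card ≤ DF.card * n := by
    have hmaps : ∀ p ∈ f2, (up p.2 p.1, p.2) ∈ DF ×ˢ (univ : Finset (Fin n)) := by
      intro p hp
      simp only [hf2, hP, mem_filter, mem_product, mem_univ, true_and] at hp
      simp only [mem_product, mem_univ, and_true, hDF, mem_filter, true_and]
      exact hp.2
    have hinj : Set.InjOn (fun p : (Fin n → Fin n) × Fin n => (up p.2 p.1, p.2)) ↑f2 := by
      rintro ⟨v, i⟩ hv ⟨w, j⟩ hw heq
      simp only [Finset.mem_coe, hf2, hP, mem_filter, mem_product, mem_univ, true_and] at hv hw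
      have hji : j = i := by
        have := congrArg Prod.snd heq
        exact this.symm
      subst hji
      have h1 : up j v = up j w := by
        have := congrArg Prod.fst heq
        exact this
      have : v = w := up_inj hv.1 hw.1 h1
      rw [this]
    calc f2.card ≤ (DF ×ˢ (univ : Finset (Fin n))).card :=
        Finset.card_le_card_of_injOn _ hmaps hinj
      _ = DF.card * n := by rw [Finset.card_product, Finset.card_univ, Fintype.card_fin]
  have hUPle : UP.card ≤ f0.card + f1.card + f2.card := by
    calc UP.card ≤ (f0 ∪ f1 ∪ f2).card := Finset.card_le_card hsub
      _ ≤ (f0 ∪ f1).card + f2.card := Finset.card_union_le _ _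
      _ ≤ f0.card + f1.card + f2.card := by
          have := Finset.card_union_le f0 f1
          omega
  have hUPcard : UP.card = (n - 1) * Fintype.card (Fin n → Fin n) := UP_card hn
  omega

lemma degsum_eq_pairs {α : Type*} [DecidableEq α] (G : SimpleGraph α) [DecidableRel G.Adj]
    (W : Finset α) :
    ∑ v ∈ W, (W.filter (fun w => G.Adj v w)).card
      = ((W ×ˢ W).filter (fun p => G.Adj p.1 p.2)).card := by
  rw [Finset.card_filter, Finset.sum_product]
  exact Finset.sum_congr rfl fun v _ => Finset.card_filter _ _

lemma two_good_le_pairs (C : Set (Fin n → Fin n)) :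
    2 * ((univ ×ˢ univ : Finset ((Fin n → Fin n) × Fin n)).filter
          (fun p => (p.1 p.2).val + 1 < n ∧ p.1 ∈ C ∧ up p.2 p.1 ∈ C)).card
      ≤ ((((univ : Finset (Fin n → Fin n)).filter (fun v => v ∈ C))
            ×ˢ ((univ : Finset (Fin n → Fin n)).filter (fun v => v ∈ C))).filter
          (fun p => (gridGraphN n).Adj p.1 p.2)).card := by
  classical
  set good := ((univ ×ˢ univ : Finset ((Fin n → Fin n) × Fin n)).filter
          (fun p => (p.1 p.2).val + 1 < n ∧ p.1 ∈ C ∧ up p.2 p.1 ∈ C)) with hgood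
  set CF := ((univ : Finset (Fin n → Fin n)).filter (fun v => v ∈ C)) with hCF
  set pairs := ((CF ×ˢ CF).filter (fun p => (gridGraphN n).Adj p.1 p.2)) with hpairs
  set F : ((Fin n → Fin n) × Fin n) × Bool → (Fin n → Fin n) × (Fin n → Fin n) :=
    fun q => if q.2 then (q.1.1, up q.1.2 q.1.1) else (up q.1.2 q.1.1, q.1.1) with hF
  have hmaps : ∀ q ∈ good ×ˢ (univ : Finset Bool), F q ∈ pairs := by
    rintro ⟨⟨v, i⟩, b⟩ hq
    simp only [mem_product, mem_univ, and_true, hgood, mem_filter, true_and] at hq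
    obtain ⟨hval, hc1, hc2⟩ := hq
    have hadj : (gridGraphN n).Adj v (up i v) := grid_adj_up hval
    have hv1 : v ∈ CF := by simp only [hCF, mem_filter, mem_univ, true_and]; exact hc1
    have hv2 : up i v ∈ CF := by simp only [hCF, mem_filter, mem_univ, true_and]; exact hc2
    cases b with
    | true =>
      simp only [hF, if_pos]
      simp only [hpairs, mem_filter, mem_product]
      exact ⟨⟨hv1, hv2⟩, hadj⟩
    | false =>
      simp only [hF, if_neg]
      simp only [hpairs, mem_filter, mem_product]
      exact ⟨⟨hv2, hv1⟩, hadj.symm⟩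
  have hinj : Set.InjOn F ↑(good ×ˢ (univ : Finset Bool)) := by
    rintro ⟨⟨v, i⟩, b⟩ hq ⟨⟨w, j⟩, b'⟩ hq' heq
    simp only [Finset.mem_coe, mem_product, mem_univ, and_true, hgood, mem_filter,
      true_and] at hq hq'
    obtain ⟨hvval, -, -⟩ := hq
    obtain ⟨hwval, -, -⟩ := hq'
    have hsv1 : sv (up i v) = sv v + 1 := sv_up hvval
    have hsv2 : sv (up j w) = sv w + 1 := sv_up hwval
    cases b with
    | true =>
      cases b' with
      | true =>
        simp only [hF, if_pos] at heq
        have h1 : v = w := congrArg Prod.fst heq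
        subst h1
        have h2 : up i v = up j v := congrArg Prod.snd heq
        have : i = j := up_index_inj hvval h2
        rw [this]
      | false =>
        simp only [hF, if_pos, if_neg] at heq
        have h1 : v = up j w := congrArg Prod.fst heq
        have h2 : up i v = w := congrArg Prod.snd heq
        have e1 : sv v = sv w + 1 := by rw [h1]; exact hsv2
        have e2 : sv w = sv v + 1 := by rw [← h2]; exact hsv1
        omega
    | false =>
      cases b' with
      | true =>
        simp only [hF, if_pos, if_neg] at heq
        have h1 : up i v = w := congrArg Prod.fst heq
        have h2 : v = up j w := congrArg Prod.snd heq
        have e1 : sv w = sv v + 1 := by rw [← h1]; exact hsv1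
        have e2 : sv v = sv w + 1 := by rw [h2]; exact hsv2
        omega
      | false =>
        simp only [hF, if_neg] at heq
        have h1 : v = w := congrArg Prod.snd heq
        subst h1
        have h2 : up i v = up j v := congrArg Prod.fst heq
        have : i = j := up_index_inj hvval h2
        rw [this]
  have hle := Finset.card_le_card_of_injOn F hmaps hinj
  rw [Finset.card_product, Finset.card_univ] at hle
  simp only [Fintype.card_bool] at hle
  omega

end GridAux


lemma sum_coverCount_eq {α : Type*} [Fintype α] (𝒞 : Multiset (Set α)) :
    ∑ v, coverCount 𝒞 v
      = (𝒞.map (fun C => (Finset.univ.filter (fun v => v ∈ C)).card)).sum := by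
  classical
  induction 𝒞 using Multiset.induction with
  | empty => simp [coverCount]
  | cons C 𝒞 ih =>
    have h1 : ∀ v : α, coverCount (C ::ₘ 𝒞) v
        = coverCount 𝒞 v + if v ∈ C then 1 else 0 := by
      intro v
      simp [coverCount, Multiset.countP_cons]
    rw [Finset.sum_congr rfl (fun v _ => h1 v), Finset.sum_add_distrib, ih]
    have h2 : (∑ v : α, if v ∈ C then 1 else 0)
        = (Finset.univ.filter (fun v => v ∈ C)).card := by
      rw [Finset.card_filter]
    rw [h2, Multiset.map_cons, Multiset.sum_cons]
    omega

lemma multiset_sum_map_lt {α : Type*} (M : Multiset α) (f : α → ℝ) (B : ℝ)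
    (h0 : M ≠ 0) (h : ∀ x ∈ M, f x < B) :
    (M.map f).sum < (Multiset.card M : ℝ) * B := by
  induction M using Multiset.induction with
  | empty => exact absurd rfl h0
  | cons a M ih =>
    rcases eq_or_ne M 0 with rfl | hM
    · have := h a (Multiset.mem_cons_self a 0)
      simpa using this
    · have h1 := ih hM (fun x hx => h x (Multiset.mem_cons_of_mem hx))
      have h2 := h a (Multiset.mem_cons_self a M)
      simp only [Multiset.map_cons, Multiset.sum_cons, Multiset.card_cons]
      push_cast
      linarith

lemma cast_multiset_sum_map {α : Type*} (M : Multiset α) (g : α → ℕ) :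
    (((M.map g).sum : ℕ) : ℝ) = (M.map (fun x => ((g x : ℕ) : ℝ))).sum := by
  induction M using Multiset.induction with
  | empty => simp
  | cons a M ih => simp [ih]

lemma treeAlpha_set_nonempty {W : Type*} [Finite W] (H : SimpleGraph W) :
    {k | treeAlphaLE H k}.Nonempty := by
  classical
  haveI : Fintype W := Fintype.ofFinite W
  refine ⟨Fintype.card W, ?_⟩
  refine ⟨⟨Unit, inferInstance, ⊥, ?_, fun _ => Set.univ, fun v => ⟨(), trivial⟩,
    fun u v _ => ⟨(), trivial, trivial⟩, fun v => ?_⟩, ?_⟩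
  · constructor
    · rw [SimpleGraph.connected_iff]
      refine ⟨fun a b => ?_, ⟨()⟩⟩
      rw [Subsingleton.elim a b]
    · exact SimpleGraph.isAcyclic_bot
  · rw [SimpleGraph.connected_iff]
    constructor
    · intro a b
      have : a = b := Subtype.ext (Subsingleton.elim _ _)
      rw [this]
    · exact ⟨⟨(), trivial⟩⟩
  · intro t I hI
    exact Finset.card_le_univ I


lemma grid_dense_treeAlpha {n m : ℕ} (hnm : n = 3*m+3) (hm : 1 ≤ m)
    (C : Set (Fin n → Fin n))
    (hdense : 3 * ((Finset.univ.filter (fun v : Fin n → Fin n => v ∉ C)).card)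
        ≤ Fintype.card (Fin n → Fin n)) :
    m ≤ treeAlpha ((gridGraphN n).induce C) := by
  classical
  have hn : 0 < n := by omega
  haveI : Nonempty (Fin n → Fin n) := ⟨fun _ => ⟨0, hn⟩⟩
  have hNpos : 0 < Fintype.card (Fin n → Fin n) := Fintype.card_pos
  have hgood := GridAux.good_card_lower hn C
  have h2good := GridAux.two_good_le_pairs (n := n) C
  have hsplit0 : (Finset.univ.filter (fun v : Fin n → Fin n => v ∈ C)).card
      + (Finset.univ.filter (fun v : Fin n → Fin n => v ∉ C)).card
      = Fintype.card (Fin n → Fin n) := by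
    rw [← Finset.card_univ]
    exact Finset.card_filter_add_card_filter_not _
  set N := Fintype.card (Fin n → Fin n) with hN
  set CF := (Finset.univ.filter (fun v : Fin n → Fin n => v ∈ C)) with hCF
  set DF := (Finset.univ.filter (fun v : Fin n → Fin n => v ∉ C)) with hDF
  have hsplit : CF.card + DF.card = N := hsplit0
  set Gd := ((Finset.univ ×ˢ Finset.univ : Finset ((Fin n → Fin n) × Fin n)).filter
          (fun p => (p.1 p.2).val + 1 < n ∧ p.1 ∈ C ∧ GridAux.up p.2 p.1 ∈ C)).card with hGd
  set P := (((CF ×ˢ CF)).filter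
          (fun p => (gridGraphN n).Adj p.1 p.2)).card with hPdef
  have hdeg : 2 * (m - 1) * CF.card
      < ∑ v ∈ CF, (CF.filter (fun w => (gridGraphN n).Adj v w)).card := by
    rw [GridAux.degsum_eq_pairs]
    -- numeric chain
    have e1 : 6 * (DF.card * n) ≤ 2 * (n * N) := by
      calc 6 * (DF.card * n) = 2 * n * (3 * DF.card) := by ring
        _ ≤ 2 * n * N := Nat.mul_le_mul_left _ hdense
        _ = 2 * (n * N) := by ring
    have e2 : 3 * ((n-1) * N) ≤ 3 * Gd + 2 * (n * N) := by omega
    have e3 : (n - 1) * N = (3*m+2) * N := by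
      have : n - 1 = 3*m+2 := by omega
      rw [this]
    have e4 : n * N = (3*m+3) * N := by rw [hnm]
    have e5 : ((3*m+2) * N) * 3 = 9*(m*N) + 6*N := by ring
    have e6 : 2*((3*m+3)*N) = 6*(m*N) + 6*N := by ring
    have e7 : m * N ≤ Gd := by omega
    have hCFN : CF.card ≤ N := by omega
    have h8 : 2*(m-1)*CF.card ≤ 2*((m-1)*N) := by
      calc 2*(m-1)*CF.card = 2*((m-1)*CF.card) := by ring
        _ ≤ 2*((m-1)*N) := by
            have := Nat.mul_le_mul_left (m-1) hCFN
            omega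
    have h9 : (m-1)*N < m*N := by
      have hmm : m - 1 < m := by omega
      exact Nat.mul_lt_mul_of_lt_of_le hmm (le_refl N) hNpos
    omega
  obtain ⟨U, hUW, hUne, hUdeg⟩ :=
    GridAux.exists_min_degree_subset (gridGraphN n) (m-1) CF hdeg
  have hUC : ∀ u ∈ U, u ∈ C := fun u hu => (Finset.mem_filter.mp (hUW hu)).2
  set H := (gridGraphN n).induce C with hH
  set U' : Finset ↑C := U.subtype (fun v => v ∈ C) with hU'
  have hU'ne : U'.Nonempty := by
    obtain ⟨u, hu⟩ := hUne
    exact ⟨⟨u, hUC u hu⟩, Finset.mem_subtype.mpr hu⟩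
  refine le_csInf (treeAlpha_set_nonempty H) ?_
  intro k hk
  obtain ⟨td, htd⟩ := hk
  obtain ⟨u', hu'U', t, hubag, hnbr⟩ := TreeAux.exists_bag_containing_nbhd td U' hU'ne
  set I := U'.filter (fun w => H.Adj u' w) with hI
  have hIbag : ↑I ⊆ td.bag t := by
    intro x hx
    rw [Finset.mem_coe, hI, Finset.mem_filter] at hx
    exact hnbr x hx.1 hx.2
  have hadj_coe : ∀ a b : ↑C, H.Adj a b → (gridGraphN n).Adj ↑a ↑b := by
    intro a b hab
    exact hab
  have hIind : IsIndepSetIn H (td.bag t) I := by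
    refine ⟨hIbag, ?_⟩
    intro u₁ h₁ u₂ h₂ hne12 hadj
    rw [hI, Finset.mem_filter] at h₁ h₂
    exact GridAux.grid_triangle_free (hadj_coe _ _ h₁.2) (hadj_coe _ _ h₂.2)
      (hadj_coe _ _ hadj)
  have hIcard : m ≤ I.card := by
    have hdegu : (m-1) + 1 ≤ (U.filter (fun w => (gridGraphN n).Adj ↑u' w)).card :=
      hUdeg ↑u' (Finset.mem_subtype.mp hu'U')
    have hcardeq : I.card = (U.filter (fun w => (gridGraphN n).Adj ↑u' w)).card := by
      refine Finset.card_bij (fun w _ => ↑w) ?_ ?_ ?_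
      · intro a ha
        rw [hI, Finset.mem_filter] at ha
        rw [Finset.mem_filter]
        exact ⟨Finset.mem_subtype.mp ha.1, hadj_coe _ _ ha.2⟩
      · intro a₁ h₁ a₂ h₂ heq
        exact Subtype.ext heq
      · intro b hb
        rw [Finset.mem_filter] at hb
        refine ⟨⟨b, hUC b hb.1⟩, ?_, rfl⟩
        rw [hI, Finset.mem_filter]
        exact ⟨Finset.mem_subtype.mpr hb.1, hb.2⟩
    omega
  exact le_trans hIcard (htd t I hIind)

/-- For every `m` and every `r > 2` there is `n` such that every `(1 - 1/r)`-general
cover of the `n`-dimensional grid graph of width `n` has an element inducing a subgraph of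
tree-independence number at least `m`; consequently, the class of these grid graphs is not
fractionally tree-α-fragile. -/
theorem stmt9 :
    (∀ m r : ℕ, 2 < r →
      ∃ n : ℕ, ∀ 𝒞 : Multiset (Set (Fin n → Fin n)),
        IsGeneralCover (1 - 1 / (r : ℝ)) 𝒞 →
        ∃ C ∈ 𝒞, m ≤ treeAlpha ((gridGraphN n).induce C)) ∧
    ¬ ∃ f : ℕ → ℕ, ∀ r n : ℕ,
        ∃ 𝒞 : Multiset (Set (Fin n → Fin n)),
          IsGeneralCover (1 - 1 / (r : ℝ)) 𝒞 ∧
          ∀ C ∈ 𝒞, treeAlpha ((gridGraphN n).induce C) ≤ f r := by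
  have h1 : ∀ m r : ℕ, 2 < r →
      ∃ n : ℕ, ∀ 𝒞 : Multiset (Set (Fin n → Fin n)),
        IsGeneralCover (1 - 1 / (r : ℝ)) 𝒞 →
        ∃ C ∈ 𝒞, m ≤ treeAlpha ((gridGraphN n).induce C) := by
    intro m r hr
    rcases Nat.eq_zero_or_pos m with rfl | hm
    · refine ⟨0, ?_⟩
      intro 𝒞 hcov
      obtain ⟨C, hC⟩ := Multiset.exists_mem_of_ne_zero hcov.1
      exact ⟨C, hC, Nat.zero_le _⟩
    · refine ⟨3*m+3, ?_⟩
      set n := 3*m+3 with hn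
      intro 𝒞 hcov
      classical
      obtain ⟨hne, hβ⟩ := hcov
      set N := Fintype.card (Fin n → Fin n) with hN
      have hkey : ∃ C ∈ 𝒞,
          3 * ((Finset.univ.filter (fun v : Fin n → Fin n => v ∉ C)).card) ≤ N := by
        by_contra hcon
        push_neg at hcon
        have hr3 : (3:ℝ) ≤ (r:ℝ) := by exact_mod_cast hr
        have hlt : ∀ C ∈ 𝒞, ((Finset.univ.filter (fun v : Fin n → Fin n => v ∈ C)).card : ℝ)
            < (1 - 1/(r:ℝ)) * N := by
          intro C hC
          have hd1 := hcon C hC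
          have hd2 : (Finset.univ.filter (fun v : Fin n → Fin n => v ∈ C)).card
              + (Finset.univ.filter (fun v : Fin n → Fin n => v ∉ C)).card = N := by
            rw [hN, ← Finset.card_univ]
            exact Finset.card_filter_add_card_filter_not _
          have hd3 : 3 * (Finset.univ.filter (fun v : Fin n → Fin n => v ∈ C)).card + N
              < 3 * N := by omega
          have hd4 : 3 * ((Finset.univ.filter (fun v : Fin n → Fin n => v ∈ C)).card : ℝ)
              + (N:ℝ) < 3*(N:ℝ) := by exact_mod_cast hd3
          have hd5 : 1/(r:ℝ) ≤ 1/3 := by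
            apply one_div_le_one_div_of_le
            · norm_num
            · exact hr3
          have hN0 : (0:ℝ) ≤ (N:ℝ) := Nat.cast_nonneg N
          nlinarith
        have hlow : (1 - 1/(r:ℝ)) * (Multiset.card 𝒞 : ℝ) * N
            ≤ ((∑ v, coverCount 𝒞 v : ℕ) : ℝ) := by
          have hs1 : ∑ v : Fin n → Fin n, ((1 - 1/(r:ℝ)) * (Multiset.card 𝒞 : ℝ))
              ≤ ∑ v : Fin n → Fin n, (coverCount 𝒞 v : ℝ) :=
            Finset.sum_le_sum (fun v _ => hβ v)
          rw [Finset.sum_const, Finset.card_univ] at hs1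
          rw [Nat.cast_sum]
          calc (1 - 1/(r:ℝ)) * (Multiset.card 𝒞 : ℝ) * N
              = N • ((1 - 1/(r:ℝ)) * (Multiset.card 𝒞 : ℝ)) := by
                rw [nsmul_eq_mul]; ring
            _ ≤ _ := hs1
        have hup := multiset_sum_map_lt 𝒞
          (fun C => ((Finset.univ.filter (fun v : Fin n → Fin n => v ∈ C)).card : ℝ))
          ((1 - 1/(r:ℝ)) * N) hne hlt
        rw [sum_coverCount_eq, cast_multiset_sum_map] at hlow
        have hring : (Multiset.card 𝒞 : ℝ) * ((1 - 1/(r:ℝ)) * N)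
            = (1 - 1/(r:ℝ)) * (Multiset.card 𝒞 : ℝ) * N := by ring
        rw [hring] at hup
        exact absurd (lt_of_le_of_lt hlow hup) (lt_irrefl _)
      obtain ⟨C, hC, hdense⟩ := hkey
      exact ⟨C, hC, grid_dense_treeAlpha hn hm C hdense⟩
  refine ⟨h1, ?_⟩
  rintro ⟨f, hf⟩
  obtain ⟨n, hn⟩ := h1 (f 3 + 1) 3 (by norm_num)
  obtain ⟨𝒞, hcov, hbound⟩ := hf 3 n
  obtain ⟨C, hC, hge⟩ := hn 𝒞 hcov
  have := hbound C hC
  omega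
end

section
/- Let d ≥ 2 and let 𝒪 be a finite collection of bounded measurable subsets of ℝ^d, each of positive size, and let r₀ = min_{O∈𝒪} s(O). Suppose there exists a real number a with 0 < a ≤ 1 such that for every O ∈ 𝒪, every point x ∈ O, and every r with r₀ ≤ r ≤ s(O), the Lebesgue measure of {y ∈ O : dist(y, x) ≤ r} is at least a·r^d. Then 𝒪 is (3^d/a)-fat; in particular, for every r > 0 and every axis-aligned closed hypercube R of side length r, any subcollection of pairwise disjoint members of 𝒪, each of size at least r and each intersecting R, has at most 3^d/a members. -/
open Classical

lemma myCoordDist {d : ℕ} (x y : EuclideanSpace ℝ (Fin d)) (j : Fin d) :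
    dist (x j) (y j) ≤ dist x y := by
  rw [EuclideanSpace.dist_eq, Real.le_sqrt dist_nonneg]
  · exact Finset.single_le_sum (f := fun i => dist (x i) (y i) ^ 2)
      (fun i _ => sq_nonneg _) (Finset.mem_univ j)
  · positivity

lemma myCubeVolume (d : ℕ) (x : EuclideanSpace ℝ (Fin d)) (s : ℝ) (hs : 0 ≤ s) :
    MeasureTheory.volume (cube d x s) = ENNReal.ofReal (s ^ d) := by
  have h : cube d x s = ((MeasurableEquiv.toLp 2 (Fin d → ℝ)).symm) ⁻¹'
      (Set.univ.pi fun j => Set.Icc (x j) (x j + s)) := by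
    ext y
    simp [cube, Set.mem_pi, MeasurableEquiv.coe_toLp_symm, Pi.le_def, forall_and]
  rw [h, (EuclideanSpace.volume_preserving_symm_measurableEquiv_toLp (Fin d)).measure_preimage
    (by exact (MeasurableSet.univ_pi fun j => measurableSet_Icc).nullMeasurableSet),
    MeasureTheory.volume_pi_pi]
  simp [Real.volume_Icc, ENNReal.ofReal_pow hs]

/-- if every object, every point `x` in it and every `r₀ ≤ r ≤ s(O)` satisfy
`vol {y ∈ O : dist y x ≤ r} ≥ a·r^d`, then the collection is `(3^d/a)`-fat; in particular any
pairwise disjoint subcollection of objects of size at least `r` meeting a size-`r` hypercube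
has at most `3^d/a` members. -/
theorem stmt10 {ι : Type} [Fintype ι] [Nonempty ι] (d : ℕ) (hd : 2 ≤ d)
    (O : ι → Set (EuclideanSpace ℝ (Fin d)))
    (hbnd : ∀ i, Bornology.IsBounded (O i))
    (hmeas : ∀ i, MeasurableSet (O i))
    (hpos : ∀ i, 0 < objSize d (O i))
    (r₀ : ℝ) (hr₀ : IsLeast (Set.range fun i => objSize d (O i)) r₀)
    (a : ℝ) (ha0 : 0 < a) (ha1 : a ≤ 1)
    (hvol : ∀ i, ∀ x ∈ O i, ∀ r : ℝ, r₀ ≤ r → r ≤ objSize d (O i) →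
      ENNReal.ofReal (a * r ^ d) ≤ MeasureTheory.volume {y ∈ O i | dist y x ≤ r}) :
    IsFat d ((3 : ℝ) ^ d / a) O ∧
    ∀ r : ℝ, 0 < r → ∀ x : EuclideanSpace ℝ (Fin d), ∀ P : Finset ι,
      (∀ i ∈ P, ∀ j ∈ P, i ≠ j → Disjoint (O i) (O j)) →
      (∀ i ∈ P, (O i ∩ cube d x r).Nonempty ∧ r ≤ objSize d (O i)) →
      (P.card : ℝ) ≤ (3 : ℝ) ^ d / a := by
  obtain ⟨⟨i₀, hi₀⟩, hlb⟩ := hr₀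
  have hr₀pos : 0 < r₀ := hi₀ ▸ hpos i₀
  have key : ∀ r : ℝ, 0 < r → ∀ x : EuclideanSpace ℝ (Fin d), ∀ P : Finset ι,
      (∀ i ∈ P, ∀ j ∈ P, i ≠ j → Disjoint (O i) (O j)) →
      (∀ i ∈ P, (O i ∩ cube d x r).Nonempty ∧ r ≤ objSize d (O i)) →
      (P.card : ℝ) ≤ (3 : ℝ) ^ d / a := by
    intro r hr x P hdisj hP
    set r' : ℝ := max r r₀ with hr'def
    have hr'pos : 0 < r' := lt_of_lt_of_le hr (le_max_left _ _)
    have hrr' : r ≤ r' := le_max_left _ _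
    set pt : ι → EuclideanSpace ℝ (Fin d) :=
      fun i => if h : i ∈ P then (hP i h).1.choose else x with hptdef
    have hpt : ∀ i ∈ P, pt i ∈ O i ∩ cube d x r := by
      intro i h
      simp only [hptdef, dif_pos h]
      exact (hP i h).1.choose_spec
    set S : ι → Set (EuclideanSpace ℝ (Fin d)) :=
      fun i => {y ∈ O i | dist y (pt i) ≤ r'} with hSdef
    set x' : EuclideanSpace ℝ (Fin d) := WithLp.toLp 2 (fun j => x j - r') with hx'def
    have hsub : ∀ i ∈ P, S i ⊆ cube d x' (3 * r') := by
      intro i hi y hy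
      obtain ⟨hyO, hyd⟩ := hy
      intro j
      have h1 : dist (y j) (pt i j) ≤ r' := le_trans (myCoordDist y (pt i) j) hyd
      have h2 := (hpt i hi).2 j
      rw [Real.dist_eq] at h1
      have h1' := abs_le.mp h1
      constructor
      · simp only [hx'def, PiLp.toLp_apply]; linarith [h1'.1, h2.1]
      · simp only [hx'def, PiLp.toLp_apply]; linarith [h1'.2, h2.2]
    have hSmeas : ∀ i ∈ P, MeasurableSet (S i) := by
      intro i _
      have : S i = O i ∩ Metric.closedBall (pt i) r' := by
        ext y; simp [hSdef, Metric.mem_closedBall, and_comm]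
      rw [this]
      exact (hmeas i).inter measurableSet_closedBall
    have hSvol : ∀ i ∈ P, ENNReal.ofReal (a * r' ^ d) ≤ MeasureTheory.volume (S i) := by
      intro i hi
      refine hvol i (pt i) (hpt i hi).1 r' (le_max_right _ _) ?_
      exact max_le (hP i hi).2 (hlb ⟨i, rfl⟩)
    have hSdisj : (↑P : Set ι).PairwiseDisjoint S := by
      intro i hi j hj hij
      exact (hdisj i hi j hj hij).mono (fun y hy => hy.1) (fun y hy => hy.1)
    have hunion :
        MeasureTheory.volume (⋃ i ∈ P, S i) = ∑ i ∈ P, MeasureTheory.volume (S i) :=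
      MeasureTheory.measure_biUnion_finset hSdisj hSmeas
    have hle : ∑ i ∈ P, MeasureTheory.volume (S i) ≤ ENNReal.ofReal ((3 * r') ^ d) := by
      rw [← hunion, ← myCubeVolume d x' (3 * r') (by positivity)]
      exact MeasureTheory.measure_mono (Set.iUnion₂_subset hsub)
    have hsum : (P.card : ENNReal) * ENNReal.ofReal (a * r' ^ d) ≤
        ENNReal.ofReal ((3 * r') ^ d) := by
      calc (P.card : ENNReal) * ENNReal.ofReal (a * r' ^ d)
          = ∑ _i ∈ P, ENNReal.ofReal (a * r' ^ d) := by
            rw [Finset.sum_const, nsmul_eq_mul]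
        _ ≤ ∑ i ∈ P, MeasureTheory.volume (S i) := Finset.sum_le_sum hSvol
        _ ≤ _ := hle
    have har' : 0 < a * r' ^ d := by positivity
    have hreal : (P.card : ℝ) * (a * r' ^ d) ≤ (3 * r') ^ d := by
      have := hsum
      rw [← ENNReal.ofReal_natCast, ← ENNReal.ofReal_mul (by positivity)] at this
      exact (ENNReal.ofReal_le_ofReal_iff (by positivity)).mp this
    rw [le_div_iff₀ ha0]
    have hrd : 0 < r' ^ d := by positivity
    rw [mul_pow] at hreal
    nlinarith [hrd, Nat.cast_nonneg (α := ℝ) P.card]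
  refine ⟨?_, key⟩
  intro r hr x P hdisj hP
  set pt : ι → EuclideanSpace ℝ (Fin d) :=
    fun i => if h : i ∈ P then (hP i h).1.choose else x with hptdef
  have hpt : ∀ i ∈ P, pt i ∈ O i ∩ cube d x r := by
    intro i h
    simp only [hptdef, dif_pos h]
    exact (hP i h).1.choose_spec
  refine ⟨P.image pt, ?_, ?_⟩
  · have h1 : ((P.image pt).card : ℝ) ≤ (P.card : ℝ) := by
      exact_mod_cast Finset.card_image_le
    exact h1.trans (key r hr x P hdisj hP)
  · intro i hi
    exact ⟨pt i, Finset.mem_image_of_mem pt hi, (hpt i hi).1⟩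
end

section
/- Let ℓ ≥ 1 be an integer and let ℛ be a finite family of nondegenerate axis-aligned closed rectangles in ℝ², each of the form [a, b] × [c, d] with integers a < b and c < d and with 1 ≤ a and b ≤ ℓ (so all x-coordinates of vertices lie among ℓ consecutive grid columns). Then the intersection graph G of ℛ has a tree decomposition 𝒯 with independence number α(𝒯) ≤ ⌊ℓ/2⌋; in particular, tree-α(G) ≤ ⌊ℓ/2⌋. -/
open Classical

section Aux

open SimpleGraph

lemma reach_invariant {V : Type*} {G : SimpleGraph V} (f : V → Prop)
    (h : ∀ u v, G.Adj u v → (f u ↔ f v)) {u v : V} (hr : G.Reachable u v) : f u ↔ f v := by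
  obtain ⟨w⟩ := hr
  induction w with
  | nil => exact Iff.rfl
  | cons ha _ ih => exact (h _ _ ha).trans ih

lemma pathGraph_bridge_aux {n : ℕ} {u v : Fin n} (h : (pathGraph n).Adj u v)
    (huv : u.val + 1 = v.val) : (pathGraph n).IsBridge s(u, v) := by
  rw [SimpleGraph.isBridge_iff]
  intro hr
  have key := reach_invariant (G := pathGraph n \ SimpleGraph.fromEdgeSet {s(u, v)})
    (fun x : Fin n => x.val ≤ u.val) ?_ hr
  · have := key.mp le_rfl
    omega
  · intro x y hxy
    simp only [SimpleGraph.sdiff_adj, SimpleGraph.fromEdgeSet_adj, Set.mem_singleton_iff,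
      pathGraph_adj] at hxy
    obtain ⟨hstep, hne⟩ := hxy
    constructor
    · intro hx
      by_contra hy
      -- then x.val = u.val, y.val = u.val + 1 = v.val
      have hx' : x = u := Fin.ext (by omega)
      have hy' : y = v := Fin.ext (by omega)
      exact hne ⟨by rw [hx', hy'], by rw [hx', hy']; exact fun hq => (by omega : u.val ≠ v.val) (by rw [hq])⟩
    · intro hy
      by_contra hx
      have hx' : x = v := Fin.ext (by omega)
      have hy' : y = u := Fin.ext (by omega)
      refine hne ⟨by rw [hx', hy']; exact Sym2.eq_swap, ?_⟩
      rw [hx', hy']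
      exact fun hq => (by omega : u.val ≠ v.val) (by rw [hq])

lemma pathGraph_isAcyclic (n : ℕ) : (pathGraph n).IsAcyclic := by
  rw [SimpleGraph.isAcyclic_iff_forall_adj_isBridge]
  intro u v h
  rcases pathGraph_adj.mp h with h1 | h1
  · exact pathGraph_bridge_aux h h1
  · rw [Sym2.eq_swap]
    exact pathGraph_bridge_aux h.symm h1

lemma pathGraph_isTree (n : ℕ) : (pathGraph (n + 1)).IsTree :=
  ⟨pathGraph_connected n, pathGraph_isAcyclic _⟩

lemma interval_connected {n : ℕ} (S : Set (Fin n))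
    (hconv : ∀ s ∈ S, ∀ t ∈ S, ∀ u : Fin n, (s : Fin n).val ≤ u.val → u.val ≤ (t : Fin n).val → u ∈ S)
    (hne : S.Nonempty) : ((pathGraph n).induce S).Connected := by
  have hne' : Nonempty S := hne.to_subtype
  have key : ∀ k : ℕ, ∀ x y : S, (y : Fin n).val = (x : Fin n).val + k →
      ((pathGraph n).induce S).Reachable x y := by
    intro k
    induction k with
    | zero =>
      intro x y hxy
      have : x = y := Subtype.ext (Fin.ext (by omega))
      rw [this]
    | succ k ih =>
      intro x y hxy
      have hlt : (x : Fin n).val + 1 < n := by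
        have := (y : Fin n).isLt
        omega
      have hz : (⟨(x : Fin n).val + 1, hlt⟩ : Fin n) ∈ S :=
        hconv _ x.2 _ y.2 _ (Nat.le_succ _)
          ((by omega : (x : Fin n).val + 1 ≤ (y : Fin n).val))
      have hadj : ((pathGraph n).induce S).Adj x ⟨_, hz⟩ := by
        simp only [SimpleGraph.induce, SimpleGraph.comap_adj, Function.Embedding.coe_subtype,
          pathGraph_adj]
        left; trivial
      exact hadj.reachable.trans (ih ⟨_, hz⟩ y (by simp; omega))
  haveI := hne'
  refine SimpleGraph.Connected.mk fun x y => ?_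
  rcases le_total (x : Fin n).val (y : Fin n).val with h | h
  · exact key ((y : Fin n).val - (x : Fin n).val) x y (by omega)
  · exact (key ((x : Fin n).val - (y : Fin n).val) y x (by omega)).symm

lemma indep_card_bound {ι : Type} (l : ℕ) (a b : ι → ℤ)
    (hab : ∀ i, a i < b i) (ha : ∀ i, 1 ≤ a i) (hb : ∀ i, b i ≤ (l : ℤ))
    (I : Finset ι) (hdisj : ∀ i ∈ I, ∀ j ∈ I, i ≠ j → b i < a j ∨ b j < a i) :
    I.card ≤ l / 2 := by
  classical
  set f : ι → ℕ := fun i => ((a i + 1) / 2).toNat with hf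
  have hcard : I.card = (I.image f).card := by
    rw [Finset.card_image_of_injOn]
    intro i hi j hj hij
    by_contra hne
    have h1 := hab i; have h2 := hab j; have h3 := ha i; have h4 := ha j
    have := hdisj i hi j hj hne
    simp only [hf] at hij
    omega
  rw [hcard]
  have hsub : I.image f ⊆ Finset.Icc 1 (l / 2) := by
    intro m hm
    obtain ⟨i, _, rfl⟩ := Finset.mem_image.mp hm
    have h1 := hab i; have h2 := ha i; have h3 := hb i
    simp only [hf, Finset.mem_Icc]
    omega
  calc (I.image f).card ≤ (Finset.Icc 1 (l / 2)).card := Finset.card_le_card hsub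
    _ = l / 2 := by rw [Nat.card_Icc]; omega

end Aux

/-- the intersection graph of axis-aligned rectangles with integer corners whose
x-coordinates lie in `{1, …, ℓ}` has a tree decomposition of independence number at most
`⌊ℓ/2⌋`. -/
theorem stmt16 {ι : Type} [Fintype ι] (l : ℕ) (hl : 1 ≤ l)
    (a b c d : ι → ℤ) (hab : ∀ i, a i < b i) (hcd : ∀ i, c i < d i)
    (ha : ∀ i, 1 ≤ a i) (hb : ∀ i, b i ≤ (l : ℤ)) :
    ∃ td : TreeDecomp (intersectionGraph fun i =>
        Set.Icc (((a i : ℝ), (c i : ℝ)) : ℝ × ℝ) (((b i : ℝ), (d i : ℝ)) : ℝ × ℝ)),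
      td.IndepNumLE (l / 2) ∧
      treeAlpha (intersectionGraph fun i =>
        Set.Icc (((a i : ℝ), (c i : ℝ)) : ℝ × ℝ) (((b i : ℝ), (d i : ℝ)) : ℝ × ℝ)) ≤ l / 2 := by
  classical
  set G := intersectionGraph fun i =>
      Set.Icc (((a i : ℝ), (c i : ℝ)) : ℝ × ℝ) (((b i : ℝ), (d i : ℝ)) : ℝ × ℝ) with hG
  set B : ℕ := Finset.univ.sup (fun i => (c i).natAbs ⊔ (d i).natAbs) with hBdef
  have hcB : ∀ i, (c i).natAbs ≤ B ∧ (d i).natAbs ≤ B := by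
    intro i
    have h := Finset.le_sup (f := fun i => (c i).natAbs ⊔ (d i).natAbs) (Finset.mem_univ i)
    exact ⟨le_trans le_sup_left h, le_trans le_sup_right h⟩
  set n : ℕ := 2 * B + 1 with hndef
  set bag : Fin n → Set ι :=
    fun t => {i | c i + B ≤ (t.val : ℤ) ∧ (t.val : ℤ) ≤ d i + B} with hbag
  -- membership of each vertex
  have hmem : ∀ i : ι, ∃ t : Fin n, i ∈ bag t := by
    intro i
    obtain ⟨h1, h2⟩ := hcB i
    have hcd' := hcd i
    refine ⟨⟨(c i + B).toNat, by omega⟩, ?_, ?_⟩ <;> simp <;> omega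
  -- edges covered
  have hedge : ∀ ⦃i j : ι⦄, G.Adj i j → ∃ t : Fin n, i ∈ bag t ∧ j ∈ bag t := by
    intro i j hadj
    obtain ⟨hne, p, hp1, hp2⟩ := hadj
    rw [Set.mem_Icc] at hp1 hp2
    have hci : (c i : ℝ) ≤ p.2 := hp1.1.2
    have hdi : p.2 ≤ (d i : ℝ) := hp1.2.2
    have hcj : (c j : ℝ) ≤ p.2 := hp2.1.2
    have hdj : p.2 ≤ (d j : ℝ) := hp2.2.2
    have h1 : c i ≤ d j := by exact_mod_cast hci.trans hdj
    have h2 : c j ≤ d i := by exact_mod_cast hcj.trans hdi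
    obtain ⟨hci', hdi'⟩ := hcB i
    obtain ⟨hcj', hdj'⟩ := hcB j
    have hcdi := hcd i; have hcdj := hcd j
    rcases le_total (c i) (c j) with h | h
    · refine ⟨⟨(c j + B).toNat, by omega⟩, ⟨?_, ?_⟩, ⟨?_, ?_⟩⟩ <;> simp <;> omega
    · refine ⟨⟨(c i + B).toNat, by omega⟩, ⟨?_, ?_⟩, ⟨?_, ?_⟩⟩ <;> simp <;> omega
  -- connectivity of the trace of each vertex
  have hconn : ∀ i : ι, ((SimpleGraph.pathGraph n).induce {t | i ∈ bag t}).Connected := by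
    intro i
    refine interval_connected _ ?_ ?_
    · rintro s ⟨hs1, hs2⟩ t ⟨ht1, ht2⟩ u hu1 hu2
      exact ⟨by omega, by omega⟩
    · obtain ⟨t, ht⟩ := hmem i
      exact ⟨t, ht⟩
  -- the independence bound in each bag
  have halpha : ∀ t : Fin n, IndepLE G (bag t) (l / 2) := by
    intro t I hI
    obtain ⟨hsub, hind⟩ := hI
    refine indep_card_bound l a b hab ha hb I ?_
    intro i hi j hj hij
    have hIi := hsub hi
    have hIj := hsub hj
    obtain ⟨hi1, hi2⟩ := hIi
    obtain ⟨hj1, hj2⟩ := hIj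
    by_contra hcon
    push_neg at hcon
    obtain ⟨hc1, hc2⟩ := hcon
    have habi := hab i; have habj := hab j
    apply hind i hi j hj hij
    refine ⟨hij, ?_⟩
    -- a common point
    set y : ℤ := (t.val : ℤ) - B with hy
    have hyi : c i ≤ y ∧ y ≤ d i := by constructor <;> omega
    have hyj : c j ≤ y ∧ y ≤ d j := by constructor <;> omega
    rcases le_total (a i) (a j) with h | h
    · refine ⟨((a j : ℝ), (y : ℝ)), Set.mem_Icc.mpr ⟨⟨?_, ?_⟩, ⟨?_, ?_⟩⟩,
        Set.mem_Icc.mpr ⟨⟨?_, ?_⟩, ⟨?_, ?_⟩⟩⟩ <;> · simp only []; exact_mod_cast (by omega)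
    · refine ⟨((a i : ℝ), (y : ℝ)), Set.mem_Icc.mpr ⟨⟨?_, ?_⟩, ⟨?_, ?_⟩⟩,
        Set.mem_Icc.mpr ⟨⟨?_, ?_⟩, ⟨?_, ?_⟩⟩⟩ <;> · simp only []; exact_mod_cast (by omega)
  refine ⟨⟨Fin n, inferInstance, SimpleGraph.pathGraph n, ?_, bag, hmem, hedge, hconn⟩, ?_, ?_⟩
  · have : n = 2 * B + 1 := rfl
    rw [this]
    exact pathGraph_isTree _
  · exact halpha
  · apply Nat.sInf_le
    exact ⟨⟨Fin n, inferInstance, SimpleGraph.pathGraph n, by rw [show n = 2 * B + 1 from rfl]; exact pathGraph_isTree _, bag, hmem, hedge, hconn⟩, halpha⟩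
end
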